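/- (Weyl's inequality, lower form) For Hermitian n x n matrices A and B and indices j <= i, \lambda_j(A+B) >= \lambda_i(A) + \lambda_{j-i+n}(B), where \lambda_k denotes the k-th largest eigenvalue. -/

import Mathlib

open Matrix Finset
open scoped RealInnerProductSpace

/-- The eigenvalues of a Hermitian matrix, sorted in decreasing order:
`eigDesc hA ⟨0, _⟩` is the largest eigenvalue. -/
noncomputable def eigDesc {n : ℕ} {A : Matrix (Fin n) (Fin n) ℝ} (hA : A.IsHermitian) :
    Fin n → ℝ :=
  fun i => (hA.eigenvalues ∘ Tuple.sort hA.eigenvalues) i.rev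

variable {n : ℕ}

lemma eigDesc_antitone {A : Matrix (Fin n) (Fin n) ℝ} (hA : A.IsHermitian) :
    Antitone (eigDesc hA) := by
  intro k l hkl
  exact Tuple.monotone_sort hA.eigenvalues (Fin.rev_le_rev.mpr hkl)

noncomputable def eigDescBasis {A : Matrix (Fin n) (Fin n) ℝ} (hA : A.IsHermitian) :
    OrthonormalBasis (Fin n) ℝ (EuclideanSpace ℝ (Fin n)) :=
  hA.eigenvectorBasis.reindex (Fin.revPerm.trans (Tuple.sort hA.eigenvalues)).symm

lemma mulVec_eigDescBasis {A : Matrix (Fin n) (Fin n) ℝ} (hA : A.IsHermitian) (k : Fin n) :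
    A *ᵥ ⇑(eigDescBasis hA k) = eigDesc hA k • ⇑(eigDescBasis hA k) := by
  have h1 : eigDescBasis hA k = hA.eigenvectorBasis (Tuple.sort hA.eigenvalues k.rev) := by
    simp [eigDescBasis, OrthonormalBasis.reindex_apply]
  rw [h1]
  exact hA.mulVec_eigenvectorBasis _

open Matrix Finset
open scoped RealInnerProductSpace

variable {n : ℕ}

lemma inner_mulVec_eq (e : OrthonormalBasis (Fin n) ℝ (EuclideanSpace ℝ (Fin n)))
    (μ : Fin n → ℝ) (M : Matrix (Fin n) (Fin n) ℝ)
    (hM : ∀ k, M *ᵥ ⇑(e k) = μ k • ⇑(e k)) (v : EuclideanSpace ℝ (Fin n)) :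
    ⟪v, (WithLp.toLp 2 (M *ᵥ v) : EuclideanSpace ℝ (Fin n))⟫ = ∑ k, μ k * ⟪e k, v⟫ ^ 2 := by
  have hv : (v : EuclideanSpace ℝ (Fin n)) = ∑ k, ⟪e k, v⟫ • e k := by
    simpa [OrthonormalBasis.repr_apply_apply] using (e.sum_repr v).symm
  conv_lhs => rw [show (WithLp.toLp 2 (M *ᵥ v) : EuclideanSpace ℝ (Fin n)) = M.toEuclideanLin v from rfl]
  conv_lhs => enter [3]; rw [hv]
  rw [map_sum, inner_sum]
  congr 1
  ext k
  rw [LinearMap.map_smul]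
  have h2 : M.toEuclideanLin (e k) = (μ k • e k : EuclideanSpace ℝ (Fin n)) := congrArg (WithLp.toLp 2) (hM k)
  rw [h2, real_inner_smul_right, real_inner_smul_right, real_inner_comm]
  ring

lemma inner_eq_zero_of_mem_span (e : OrthonormalBasis (Fin n) ℝ (EuclideanSpace ℝ (Fin n)))
    (S : Set (Fin n)) {v : EuclideanSpace ℝ (Fin n)}
    (hv : v ∈ Submodule.span ℝ (⇑e '' S)) {k : Fin n} (hk : k ∉ S) : ⟪e k, v⟫ = 0 := by
  induction hv using Submodule.span_induction with
  | mem x hx =>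
    obtain ⟨m, hm, rfl⟩ := hx
    have := e.orthonormal
    rw [orthonormal_iff_ite] at this
    rw [this]
    simp only [ite_eq_right_iff]
    rintro rfl; exact absurd hm hk
  | zero => simp
  | add x y hx hy ihx ihy => rw [inner_add_right, ihx, ihy]; ring
  | smul a x hx ih => rw [real_inner_smul_right, ih]; ring

lemma norm_sq_eq (e : OrthonormalBasis (Fin n) ℝ (EuclideanSpace ℝ (Fin n)))
    (v : EuclideanSpace ℝ (Fin n)) : ⟪v, v⟫ = ∑ k, ⟪e k, v⟫ ^ 2 := by
  have := inner_mulVec_eq e (fun _ => 1) 1 (fun k => by simp [Matrix.one_mulVec]) v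
  simpa [Matrix.one_mulVec] using this

lemma quad_ge (e : OrthonormalBasis (Fin n) ℝ (EuclideanSpace ℝ (Fin n)))
    (μ : Fin n → ℝ) (M : Matrix (Fin n) (Fin n) ℝ)
    (hM : ∀ k, M *ᵥ ⇑(e k) = μ k • ⇑(e k)) (S : Set (Fin n)) (c : ℝ)
    (hc : ∀ k ∈ S, c ≤ μ k) {v : EuclideanSpace ℝ (Fin n)}
    (hv : v ∈ Submodule.span ℝ (⇑e '' S)) :
    c * ⟪v, v⟫ ≤ ⟪v, (WithLp.toLp 2 (M *ᵥ v) : EuclideanSpace ℝ (Fin n))⟫ := by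
  rw [inner_mulVec_eq e μ M hM, norm_sq_eq e v, Finset.mul_sum]
  apply Finset.sum_le_sum
  intro k _
  by_cases hk : k ∈ S
  · exact mul_le_mul_of_nonneg_right (hc k hk) (sq_nonneg _)
  · rw [inner_eq_zero_of_mem_span e S hv hk]; simp

lemma quad_le (e : OrthonormalBasis (Fin n) ℝ (EuclideanSpace ℝ (Fin n)))
    (μ : Fin n → ℝ) (M : Matrix (Fin n) (Fin n) ℝ)
    (hM : ∀ k, M *ᵥ ⇑(e k) = μ k • ⇑(e k)) (S : Set (Fin n)) (c : ℝ)
    (hc : ∀ k ∈ S, μ k ≤ c) {v : EuclideanSpace ℝ (Fin n)}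
    (hv : v ∈ Submodule.span ℝ (⇑e '' S)) :
    ⟪v, (WithLp.toLp 2 (M *ᵥ v) : EuclideanSpace ℝ (Fin n))⟫ ≤ c * ⟪v, v⟫ := by
  rw [inner_mulVec_eq e μ M hM, norm_sq_eq e v, Finset.mul_sum]
  apply Finset.sum_le_sum
  intro k _
  by_cases hk : k ∈ S
  · exact mul_le_mul_of_nonneg_right (hc k hk) (sq_nonneg _)
  · rw [inner_eq_zero_of_mem_span e S hv hk]; simp

lemma finrank_span_image (e : OrthonormalBasis (Fin n) ℝ (EuclideanSpace ℝ (Fin n)))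
    (S : Finset (Fin n)) :
    Module.finrank ℝ (Submodule.span ℝ (⇑e '' ↑S)) = S.card := by
  have hinj : Function.Injective ⇑e := e.orthonormal.linearIndependent.injective
  classical
  have : (⇑e '' ↑S) = ↑(S.image ⇑e) := by simp
  rw [this, finrank_span_finset_eq_card, Finset.card_image_of_injective _ hinj]
  exact e.orthonormal.linearIndependent.linearIndepOn_id.mono (by
    intro x hx
    obtain ⟨a, -, rfl⟩ := Finset.mem_image.mp (Finset.mem_coe.mp hx)
    exact ⟨a, rfl⟩)

lemma exists_mem_inf (U V W : Submodule ℝ (EuclideanSpace ℝ (Fin n)))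
    (h : 2 * n + 1 ≤ Module.finrank ℝ U + Module.finrank ℝ V + Module.finrank ℝ W) :
    ∃ v : EuclideanSpace ℝ (Fin n), v ≠ 0 ∧ v ∈ U ∧ v ∈ V ∧ v ∈ W := by
  have hn : Module.finrank ℝ (EuclideanSpace ℝ (Fin n)) = n := finrank_euclideanSpace_fin
  have h1 := Submodule.finrank_sup_add_finrank_inf_eq U V
  have h2 := Submodule.finrank_sup_add_finrank_inf_eq (U ⊓ V) W
  have h3 : Module.finrank ℝ ↥(U ⊔ V) ≤ n := le_trans (U ⊔ V).finrank_le (le_of_eq hn)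
  have h4 : Module.finrank ℝ ↥((U ⊓ V) ⊔ W) ≤ n := le_trans ((U ⊓ V) ⊔ W).finrank_le (le_of_eq hn)
  have hpos : 0 < Module.finrank ℝ ↥(U ⊓ V ⊓ W) := by omega
  obtain ⟨x, hx⟩ := Module.finrank_pos_iff_exists_ne_zero.mp hpos
  exact ⟨↑x, by simpa [Submodule.coe_eq_zero] using hx,
    x.2.1.1, x.2.1.2, x.2.2⟩

/-- Weyl's inequality (lower form), with 0-based indices: for `j ≤ i`,
`λ_j(A+B) ≥ λ_i(A) + λ_{j-i+n}(B)` (the 1-based index `j-i+n` becomes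
`n - 1 - (i - j)` with 0-based indexing). -/
theorem weyl_lower {n : ℕ} {A B : Matrix (Fin n) (Fin n) ℝ}
    (hA : A.IsHermitian) (hB : B.IsHermitian) (i j : Fin n) (hij : j ≤ i) :
    eigDesc hA i + eigDesc hB ⟨n - 1 - (i.val - j.val), by have := i.isLt; omega⟩ ≤
      eigDesc (hA.add hB) j := by
  have hC : (A + B).IsHermitian := hA.add hB
  set r : Fin n := ⟨n - 1 - (i.val - j.val), by have := i.isLt; omega⟩ with hr
  set eA := eigDescBasis hA
  set eB := eigDescBasis hB
  set eC := eigDescBasis hC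
  set U := Submodule.span ℝ (⇑eA '' ↑(Finset.Iic i))
  set V := Submodule.span ℝ (⇑eB '' ↑(Finset.Iic r))
  set X := Submodule.span ℝ (⇑eC '' ↑(Finset.Ici j))
  have hdim : 2 * n + 1 ≤ Module.finrank ℝ U + Module.finrank ℝ V + Module.finrank ℝ X := by
    rw [finrank_span_image eA, finrank_span_image eB, finrank_span_image eC,
      Fin.card_Iic, Fin.card_Iic, Fin.card_Ici]
    have h1 := i.isLt
    have h2 : j.val ≤ i.val := hij
    have h3 : r.val = n - 1 - (i.val - j.val) := rfl
    omega
  obtain ⟨v, hv0, hvU, hvV, hvX⟩ := exists_mem_inf U V X hdim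
  have hAq : eigDesc hA i * ⟪v, v⟫ ≤ ⟪v, (WithLp.toLp 2 (A *ᵥ v) : EuclideanSpace ℝ (Fin n))⟫ :=
    quad_ge eA (eigDesc hA) A (mulVec_eigDescBasis hA) _ _
      (fun k hk => eigDesc_antitone hA (Finset.mem_Iic.mp (Finset.mem_coe.mp hk))) hvU
  have hBq : eigDesc hB r * ⟪v, v⟫ ≤ ⟪v, (WithLp.toLp 2 (B *ᵥ v) : EuclideanSpace ℝ (Fin n))⟫ :=
    quad_ge eB (eigDesc hB) B (mulVec_eigDescBasis hB) _ _
      (fun k hk => eigDesc_antitone hB (Finset.mem_Iic.mp (Finset.mem_coe.mp hk))) hvV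
  have hCq : ⟪v, (WithLp.toLp 2 ((A + B) *ᵥ v) : EuclideanSpace ℝ (Fin n))⟫ ≤ eigDesc hC j * ⟪v, v⟫ :=
    quad_le eC (eigDesc hC) (A + B) (mulVec_eigDescBasis hC) _ _
      (fun k hk => eigDesc_antitone hC (Finset.mem_Ici.mp (Finset.mem_coe.mp hk))) hvX
  have hsplit : ⟪v, (WithLp.toLp 2 ((A + B) *ᵥ v) : EuclideanSpace ℝ (Fin n))⟫
      = ⟪v, (WithLp.toLp 2 (A *ᵥ v) : EuclideanSpace ℝ (Fin n))⟫ + ⟪v, (WithLp.toLp 2 (B *ᵥ v) : EuclideanSpace ℝ (Fin n))⟫ := by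
    have : (WithLp.toLp 2 ((A + B) *ᵥ v) : EuclideanSpace ℝ (Fin n))
        = (WithLp.toLp 2 (A *ᵥ v) : EuclideanSpace ℝ (Fin n)) + (WithLp.toLp 2 (B *ᵥ v) : EuclideanSpace ℝ (Fin n)) :=
      congrArg (WithLp.toLp 2) (Matrix.add_mulVec A B v)
    rw [this, inner_add_right]
  have hvpos : (0 : ℝ) < ⟪v, v⟫ := lt_of_le_of_ne real_inner_self_nonneg (fun h => hv0 (inner_self_eq_zero.mp h.symm))
  have key : (eigDesc hA i + eigDesc hB r) * ⟪v, v⟫ ≤ eigDesc hC j * ⟪v, v⟫ := by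
    rw [add_mul]
    calc eigDesc hA i * ⟪v, v⟫ + eigDesc hB r * ⟪v, v⟫
        ≤ ⟪v, (WithLp.toLp 2 (A *ᵥ v) : EuclideanSpace ℝ (Fin n))⟫ + ⟪v, (WithLp.toLp 2 (B *ᵥ v) : EuclideanSpace ℝ (Fin n))⟫ :=
          add_le_add hAq hBq
      _ = ⟪v, (WithLp.toLp 2 ((A + B) *ᵥ v) : EuclideanSpace ℝ (Fin n))⟫ := hsplit.symm
      _ ≤ eigDesc hC j * ⟪v, v⟫ := hCq
  exact le_of_mul_le_mul_right key hvpos
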